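/- The function φ(W) = Σ_{j=1}^M (w_j⁴ − (3M/(M+2))·(r²/M)²) restricted to the sphere |W|² = r² is an eigenfunction of the Kac collision operator L_M with eigenvalue −Δ_M where Δ_M = (1/2)·(M+2)/(M−1). -/

import Mathlib

open MeasureTheory Real

/-- Rotation of the coordinate pair `(w_j, w_k)` by angle `θ`. -/
noncomputable def kacRot {M : ℕ} (j k : Fin M) (θ : ℝ) (W : Fin M → ℝ) : Fin M → ℝ :=
  fun i => if i = j then Real.cos θ * W j - Real.sin θ * W k
    else if i = k then Real.sin θ * W j + Real.cos θ * W k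
    else W i

/-- The Kac collision operator
`L_M F(W) = (2/(M−1)) Σ_{1≤j<k≤M} ∫₀^{2π} (F(R_{jk}(θ)W) − F(W)) dθ/(2π)`. -/
noncomputable def kacL (M : ℕ) (F : (Fin M → ℝ) → ℝ) (W : Fin M → ℝ) : ℝ :=
  (2 / ((M : ℝ) - 1)) * ∑ j : Fin M, ∑ k : Fin M,
    if j < k then (∫ θ in (0 : ℝ)..(2 * π), (F (kacRot j k θ W) - F W)) / (2 * π) else 0

/-- Auxiliary: the averaged pair interaction. -/
noncomputable def kacG {M : ℕ} (W : Fin M → ℝ) (j k : Fin M) : ℝ :=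
  -(1/4) * (W j ^ 4 + W k ^ 4) + (3/2) * (W j ^ 2 * W k ^ 2)

lemma kacG_symm {M : ℕ} (W : Fin M → ℝ) (j k : Fin M) : kacG W j k = kacG W k j := by
  unfold kacG; ring

lemma kacRot_apply_ne {M : ℕ} (j k : Fin M) (θ : ℝ) (W : Fin M → ℝ) {i : Fin M}
    (hij : i ≠ j) (hik : i ≠ k) : kacRot j k θ W i = W i := by
  simp [kacRot, hij, hik]

lemma phi_diff {M : ℕ} (j k : Fin M) (hjk : j ≠ k) (θ : ℝ) (W : Fin M → ℝ) (C : ℝ) :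
    (∑ i : Fin M, ((kacRot j k θ W) i ^ 4 - C)) - (∑ i : Fin M, (W i ^ 4 - C))
      = (Real.cos θ * W j - Real.sin θ * W k) ^ 4
        + (Real.sin θ * W j + Real.cos θ * W k) ^ 4 - W j ^ 4 - W k ^ 4 := by
  rw [← Finset.sum_sub_distrib]
  have hz : ∀ i ∈ Finset.univ, i ∉ ({j, k} : Finset (Fin M)) →
      ((kacRot j k θ W) i ^ 4 - C) - (W i ^ 4 - C) = 0 := by
    intro i _ hi
    simp only [Finset.mem_insert, Finset.mem_singleton, not_or] at hi
    rw [kacRot_apply_ne j k θ W hi.1 hi.2]; ring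
  rw [← Finset.sum_subset (Finset.subset_univ ({j, k} : Finset (Fin M))) hz,
    Finset.sum_pair hjk]
  have h1 : kacRot j k θ W j = Real.cos θ * W j - Real.sin θ * W k := by
    simp [kacRot]
  have h2 : kacRot j k θ W k = Real.sin θ * W j + Real.cos θ * W k := by
    simp [kacRot, Ne.symm hjk]
  rw [h1, h2]; ring

lemma kac_integral (a b : ℝ) :
    (∫ θ in (0 : ℝ)..(2 * π),
        ((Real.cos θ * a - Real.sin θ * b) ^ 4
          + (Real.sin θ * a + Real.cos θ * b) ^ 4 - a ^ 4 - b ^ 4))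
      = (2 * π) * (-(1/4) * (a ^ 4 + b ^ 4) + (3/2) * (a ^ 2 * b ^ 2)) := by
  set K : ℝ := -(1/4) * (a ^ 4 + b ^ 4) + (3/2) * (a ^ 2 * b ^ 2) with hK
  set A : ℝ := (1/16) * (a ^ 4 + b ^ 4) - (3/8) * (a ^ 2 * b ^ 2) with hA
  set B : ℝ := -(1/4) * (a * b ^ 3 - a ^ 3 * b) with hB
  have hderiv : ∀ θ : ℝ,
      HasDerivAt (fun θ : ℝ => K * θ + A * Real.sin (4 * θ) + B * Real.cos (4 * θ))
        ((Real.cos θ * a - Real.sin θ * b) ^ 4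
          + (Real.sin θ * a + Real.cos θ * b) ^ 4 - a ^ 4 - b ^ 4) θ := by
    intro θ
    have h1 : HasDerivAt (fun θ : ℝ => 4 * θ) 4 θ := by
      simpa using (hasDerivAt_id θ).const_mul (4 : ℝ)
    have hs : HasDerivAt (fun θ : ℝ => Real.sin (4 * θ)) (Real.cos (4 * θ) * 4) θ :=
      (Real.hasDerivAt_sin (4 * θ)).comp θ h1
    have hc : HasDerivAt (fun θ : ℝ => Real.cos (4 * θ)) (-Real.sin (4 * θ) * 4) θ :=
      (Real.hasDerivAt_cos (4 * θ)).comp θ h1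
    have h := (((hasDerivAt_id θ).const_mul K).add (hs.const_mul A)).add (hc.const_mul B)
    refine h.congr_deriv ?_
    symm
    rw [show (4 : ℝ) * θ = 2 * (2 * θ) by ring]
    simp only [Real.cos_two_mul, Real.sin_two_mul]
    have hpy := Real.sin_sq_add_cos_sq θ
    set s := Real.sin θ
    set c := Real.cos θ
    rw [hK, hA, hB]
    linear_combination (b^4 + a^4 - c^2*b^4 + 12*c^2*a^2*b^2 - c^2*a^4
      - 4*s*c*a*b^3 + 4*s*c*a^3*b + s^2*b^4 + s^2*a^4) * hpy
  have hcont : Continuous fun θ : ℝ =>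
      (Real.cos θ * a - Real.sin θ * b) ^ 4
        + (Real.sin θ * a + Real.cos θ * b) ^ 4 - a ^ 4 - b ^ 4 := by
    fun_prop
  rw [intervalIntegral.integral_eq_sub_of_hasDerivAt (fun θ _ => hderiv θ)
    (hcont.intervalIntegrable _ _)]
  have hsin : Real.sin (4 * (2 * π)) = 0 := by
    rw [show (4 : ℝ) * (2 * π) = ((8 : ℤ) : ℝ) * π by push_cast; ring]
    exact Real.sin_int_mul_pi 8
  have hcos : Real.cos (4 * (2 * π)) = 1 := by
    rw [show (4 : ℝ) * (2 * π) = ((4 : ℤ) : ℝ) * (2 * π) by push_cast; ring]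
    exact Real.cos_int_mul_two_pi 4
  rw [hsin, hcos]
  norm_num
  ring

lemma sum_kacG_diag {M : ℕ} (W : Fin M → ℝ) :
    (∑ j : Fin M, kacG W j j) = ∑ i : Fin M, W i ^ 4 := by
  refine Finset.sum_congr rfl fun j _ => ?_
  unfold kacG; ring

lemma sum_kacG_total {M : ℕ} (W : Fin M → ℝ) :
    (∑ j : Fin M, ∑ k : Fin M, kacG W j k)
      = -((M : ℝ) / 2) * (∑ i : Fin M, W i ^ 4)
        + (3/2) * ((∑ i : Fin M, W i ^ 2) * (∑ i : Fin M, W i ^ 2)) := by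
  have inner : ∀ j : Fin M, (∑ k : Fin M, kacG W j k)
      = -(1/4) * ((M : ℝ) * W j ^ 4 + ∑ i : Fin M, W i ^ 4)
        + (3/2) * (W j ^ 2 * ∑ i : Fin M, W i ^ 2) := by
    intro j
    calc (∑ k : Fin M, kacG W j k)
        = ∑ k : Fin M, ((-(1/4) * W j ^ 4)
            + ((-(1/4)) * W k ^ 4 + ((3/2) * W j ^ 2) * W k ^ 2)) :=
          Finset.sum_congr rfl fun k _ => by unfold kacG; ring
      _ = (M : ℝ) * (-(1/4) * W j ^ 4)
            + ((-(1/4)) * (∑ k : Fin M, W k ^ 4)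
              + ((3/2) * W j ^ 2) * (∑ k : Fin M, W k ^ 2)) := by
          rw [Finset.sum_add_distrib, Finset.sum_add_distrib, Finset.sum_const,
            ← Finset.mul_sum, ← Finset.mul_sum, Finset.card_univ, Fintype.card_fin,
            nsmul_eq_mul]
      _ = _ := by ring
  calc (∑ j : Fin M, ∑ k : Fin M, kacG W j k)
      = ∑ j : Fin M, ((-(1/4) * (∑ i : Fin M, W i ^ 4))
          + ((-((M : ℝ)/4)) * W j ^ 4 + ((3/2) * (∑ i : Fin M, W i ^ 2)) * W j ^ 2)) :=
        Finset.sum_congr rfl fun j _ => by rw [inner j]; ring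
    _ = (M : ℝ) * (-(1/4) * (∑ i : Fin M, W i ^ 4))
          + ((-((M : ℝ)/4)) * (∑ j : Fin M, W j ^ 4)
            + ((3/2) * (∑ i : Fin M, W i ^ 2)) * (∑ j : Fin M, W j ^ 2)) := by
        rw [Finset.sum_add_distrib, Finset.sum_add_distrib, Finset.sum_const,
          ← Finset.mul_sum, ← Finset.mul_sum, Finset.card_univ, Fintype.card_fin,
          nsmul_eq_mul]
    _ = _ := by ring

lemma two_mul_sum_kacG_lt {M : ℕ} (W : Fin M → ℝ) :
    2 * (∑ j : Fin M, ∑ k : Fin M, if j < k then kacG W j k else 0)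
      = (∑ j : Fin M, ∑ k : Fin M, kacG W j k) - ∑ j : Fin M, kacG W j j := by
  have hsym : (∑ j : Fin M, ∑ k : Fin M, if j < k then kacG W j k else 0)
      = ∑ j : Fin M, ∑ k : Fin M, if k < j then kacG W j k else 0 := by
    rw [Finset.sum_comm]
    refine Finset.sum_congr rfl fun j _ => Finset.sum_congr rfl fun k _ => ?_
    split_ifs with h
    · exact kacG_symm W k j
    · rfl
  have hdiag : (∑ j : Fin M, ∑ k : Fin M, if j = k then kacG W j k else 0)
      = ∑ j : Fin M, kacG W j j := by
    refine Finset.sum_congr rfl fun j _ => ?_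
    simp [Finset.sum_ite_eq]
  have htot : (∑ j : Fin M, ∑ k : Fin M, kacG W j k)
      = (∑ j : Fin M, ∑ k : Fin M, if j < k then kacG W j k else 0)
        + ((∑ j : Fin M, ∑ k : Fin M, if k < j then kacG W j k else 0)
          + (∑ j : Fin M, ∑ k : Fin M, if j = k then kacG W j k else 0)) := by
    simp only [← Finset.sum_add_distrib]
    refine Finset.sum_congr rfl fun j _ => Finset.sum_congr rfl fun k _ => ?_
    rcases lt_trichotomy j k with h | h | h
    · rw [if_pos h, if_neg (lt_asymm h), if_neg h.ne]; ring
    · subst h; simp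
    · rw [if_neg (lt_asymm h), if_pos h, if_neg (ne_of_gt h)]; ring
  linarith [hsym, hdiag, htot]

/-- The function `φ(W) = Σ_{j=1}^M (w_j⁴ − (3M/(M+2))·(r²/M)²)`, restricted to the sphere
`|W|² = r²`, is an eigenfunction of the Kac operator `L_M` with eigenvalue `−Δ_M`,
where `Δ_M = (1/2)(M+2)/(M−1)`. -/
theorem kac_eigenfunction (M : ℕ) (hM : 2 ≤ M) (r : ℝ) (hr : 0 < r)
    (φ : (Fin M → ℝ) → ℝ)
    (hφ : φ = fun W => ∑ j : Fin M, (W j ^ 4 - (3 * M / ((M : ℝ) + 2)) * (r ^ 2 / M) ^ 2))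
    (W : Fin M → ℝ) (hW : ∑ i : Fin M, W i ^ 2 = r ^ 2) :
    kacL M φ W = -((1 / 2) * ((M : ℝ) + 2) / ((M : ℝ) - 1)) * φ W := by
  have hπ : (0 : ℝ) < π := Real.pi_pos
  have hM2 : (2 : ℝ) ≤ (M : ℝ) := by exact_mod_cast hM
  have hM1 : (M : ℝ) - 1 ≠ 0 := by linarith
  have hM0 : (M : ℝ) ≠ 0 := by linarith
  have hMp2 : (M : ℝ) + 2 ≠ 0 := by linarith
  -- pointwise difference
  have hφd : ∀ (j k : Fin M), j ≠ k → ∀ θ : ℝ,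
      φ (kacRot j k θ W) - φ W
        = (Real.cos θ * W j - Real.sin θ * W k) ^ 4
          + (Real.sin θ * W j + Real.cos θ * W k) ^ 4 - W j ^ 4 - W k ^ 4 := by
    intro j k hjk θ
    rw [hφ]
    exact phi_diff j k hjk θ W _
  -- each integral term
  have hint : ∀ (j k : Fin M), j < k →
      (∫ θ in (0 : ℝ)..(2 * π), (φ (kacRot j k θ W) - φ W)) / (2 * π) = kacG W j k := by
    intro j k h
    have heq : (fun θ : ℝ => φ (kacRot j k θ W) - φ W)
        = fun θ : ℝ => (Real.cos θ * W j - Real.sin θ * W k) ^ 4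
          + (Real.sin θ * W j + Real.cos θ * W k) ^ 4 - W j ^ 4 - W k ^ 4 :=
      funext (hφd j k h.ne)
    rw [intervalIntegral.integral_congr (fun θ _ => hφd j k h.ne θ), kac_integral,
      mul_comm, mul_div_assoc, div_self (by positivity), mul_one]
    rfl
  have hφW : φ W = (∑ i : Fin M, W i ^ 4)
      - (M : ℝ) * ((3 * (M : ℝ) / ((M : ℝ) + 2)) * (r ^ 2 / (M : ℝ)) ^ 2) := by
    simp only [hφ]
    rw [Finset.sum_sub_distrib, Finset.sum_const, Finset.card_univ, Fintype.card_fin,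
      nsmul_eq_mul]
  rw [kacL]
  have hsum1 : (∑ j : Fin M, ∑ k : Fin M,
      if j < k then (∫ θ in (0 : ℝ)..(2 * π), (φ (kacRot j k θ W) - φ W)) / (2 * π) else 0)
      = ∑ j : Fin M, ∑ k : Fin M, if j < k then kacG W j k else 0 := by
    refine Finset.sum_congr rfl fun j _ => Finset.sum_congr rfl fun k _ => ?_
    split_ifs with h
    · exact hint j k h
    · rfl
  rw [hsum1]
  have key := two_mul_sum_kacG_lt W
  rw [sum_kacG_total W, sum_kacG_diag W, hW] at key
  have hT : (∑ j : Fin M, ∑ k : Fin M, if j < k then kacG W j k else 0)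
      = (-((M : ℝ) / 2) * (∑ i : Fin M, W i ^ 4) + (3/2) * (r ^ 2 * r ^ 2)
        - (∑ i : Fin M, W i ^ 4)) / 2 := by linarith
  rw [hT, hφW]
  field_simp
  ring
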